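/- arXiv:2409.09038 — 3 statements merged into one kernel-verified Lean document; each statement's English description precedes it below -/
import Mathlib

section
/- Let 1 ≤ p < ∞ and let T = (A₁,…,A_m) be a tuple of d×d bicomplex matrices with component tuples T₁ = (A₁',…,A_m') and T₂ = (A₁'',…,A_m''), each commuting. Then the geometric spectral radius of T satisfies r_p(T) ≤ ‖T‖_p; that is, for every λ in the restricted spectrum σ_{r,p}(A₁,…,A_m) one has ‖λ‖_p ≤ ‖T‖_p, where ‖T‖_p = √((‖T₁‖_p + ‖T₂‖_p)/2) with ‖T₁‖_p = sup_{‖x₁‖=1} (∑_{j=1}^m ‖A_j' x₁‖^p)^{1/p} and ‖T₂‖_p = sup_{‖x₂‖=1} (∑_{j=1}^m ‖A_j'' x₂‖^p)^{1/p} (suprema over Euclidean unit vectors in ℂ^d). -/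
open Matrix

/-- A tuple `(μ 1, …, μ m)` is a joint eigenvalue of a tuple of `d × d` complex matrices
`(B 1, …, B m)` if there is a nonzero common eigenvector `x ∈ ℂ^d`. -/
def IsJointEigC {d m : ℕ} (B : Fin m → Matrix (Fin d) (Fin d) ℂ) (μ : Fin m → ℂ) : Prop :=
  ∃ x : Fin d → ℂ, x ≠ 0 ∧ ∀ k, B k *ᵥ x = μ k • x

/-- The joint `p`-operator norm `‖B‖_p = sup_{‖x‖=1} (∑ j ‖B j x‖^p)^(1/p)` of a tuple of
`d × d` complex matrices, the supremum over Euclidean unit vectors of `ℂ^d`. -/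
noncomputable def opNormP {d m : ℕ} (p : ℝ) (B : Fin m → Matrix (Fin d) (Fin d) ℂ) : ℝ :=
  sSup {r : ℝ | ∃ x : EuclideanSpace ℂ (Fin d), ‖x‖ = 1 ∧
    r = (∑ j, ‖(EuclideanSpace.equiv (Fin d) ℂ).symm (B j *ᵥ x)‖ ^ p) ^ (1 / p)}

noncomputable def mulVecEuc {d : ℕ} (B : Matrix (Fin d) (Fin d) ℂ) :
    EuclideanSpace ℂ (Fin d) →ₗ[ℂ] EuclideanSpace ℂ (Fin d) where
  toFun x := (EuclideanSpace.equiv (Fin d) ℂ).symm (B *ᵥ x)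
  map_add' x y := by ext i; exact congrFun (Matrix.mulVec_add B x y) i
  map_smul' c x := by ext i; exact congrFun (Matrix.mulVec_smul B c x) i

lemma mulVecEuc_cont {d : ℕ} (B : Matrix (Fin d) (Fin d) ℂ) :
    Continuous fun x : EuclideanSpace ℂ (Fin d) =>
      (EuclideanSpace.equiv (Fin d) ℂ).symm (B *ᵥ x) :=
  (mulVecEuc B).continuous_of_finiteDimensional

lemma opNormP_bdd {d m : ℕ} (p : ℝ) (hp : 1 ≤ p) (B : Fin m → Matrix (Fin d) (Fin d) ℂ) :
    BddAbove {r : ℝ | ∃ x : EuclideanSpace ℂ (Fin d), ‖x‖ = 1 ∧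
      r = (∑ j, ‖(EuclideanSpace.equiv (Fin d) ℂ).symm (B j *ᵥ x)‖ ^ p) ^ (1 / p)} := by
  have hset : {r : ℝ | ∃ x : EuclideanSpace ℂ (Fin d), ‖x‖ = 1 ∧
      r = (∑ j, ‖(EuclideanSpace.equiv (Fin d) ℂ).symm (B j *ᵥ x)‖ ^ p) ^ (1 / p)} =
      (fun x : EuclideanSpace ℂ (Fin d) =>
        (∑ j, ‖(EuclideanSpace.equiv (Fin d) ℂ).symm (B j *ᵥ x)‖ ^ p) ^ (1 / p)) ''
      Metric.sphere 0 1 := by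
    ext r
    simp only [Set.mem_setOf_eq, Set.mem_image, mem_sphere_zero_iff_norm]
    constructor
    · rintro ⟨x, hx, rfl⟩; exact ⟨x, hx, rfl⟩
    · rintro ⟨x, hx, rfl⟩; exact ⟨x, hx, rfl⟩
  rw [hset]
  refine (isCompact_sphere 0 1).bddAbove_image ?_
  refine Continuous.continuousOn ?_
  refine Continuous.rpow_const ?_ (fun x => Or.inr (by positivity))
  exact continuous_finset_sum _ fun j _ =>
    (mulVecEuc_cont (B j)).norm.rpow_const fun x => Or.inr (by linarith)

lemma eig_le {d m : ℕ} (p : ℝ) (hp : 1 ≤ p) (B : Fin m → Matrix (Fin d) (Fin d) ℂ)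
    (μ : Fin m → ℂ) (h : IsJointEigC B μ) :
    (∑ k, ‖μ k‖ ^ p) ^ (1 / p) ≤ opNormP p B := by
  obtain ⟨x, hx0, hx⟩ := h
  set X : EuclideanSpace ℂ (Fin d) := (EuclideanSpace.equiv (Fin d) ℂ).symm x with hX
  have hX0 : X ≠ 0 := by
    intro hc
    apply hx0
    funext i
    exact congrFun (congrArg (fun z : EuclideanSpace ℂ (Fin d) => (z : Fin d → ℂ)) hc) i
  have hXn : ‖X‖ ≠ 0 := norm_ne_zero_iff.mpr hX0
  set c : ℂ := (‖X‖ : ℂ)⁻¹ with hc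
  set y : EuclideanSpace ℂ (Fin d) := c • X with hy
  have hy1 : ‖y‖ = 1 := by
    rw [hy, norm_smul, hc, norm_inv, Complex.norm_real, Real.norm_eq_abs, abs_norm,
      inv_mul_cancel₀ hXn]
  have key : ∀ j, (EuclideanSpace.equiv (Fin d) ℂ).symm (B j *ᵥ y) = μ j • y := by
    intro j
    ext i
    show (B j *ᵥ y) i = μ j * y i
    calc (B j *ᵥ y) i = (B j *ᵥ (c • x)) i := rfl
      _ = (c • (B j *ᵥ x)) i := by rw [Matrix.mulVec_smul]
      _ = c * (μ j • x) i := by rw [hx j]; rfl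
      _ = μ j * (c • x) i := by simp [smul_eq_mul]; ring
      _ = μ j * y i := rfl
  refine le_csSup (opNormP_bdd p hp B) ?_
  refine ⟨y, hy1, ?_⟩
  congr 1
  refine Finset.sum_congr rfl fun j _ => ?_
  rw [key j, norm_smul, hy1, mul_one]

/-- let `1 ≤ p < ∞` and let `T = (A 1, …, A m)` be a tuple of `d × d` bicomplex
matrices with commuting complex component tuples `T₁ = (A' 1, …, A' m)` and
`T₂ = (A'' 1, …, A'' m)`.  Then `r_p(T) ≤ ‖T‖_p`; that is, every element `λ` of the
restricted spectrum — every tuple `λ k = (μ k, γ k)` with `μ ∈ σ_p(T₁)`, `γ ∈ σ_p(T₂)` —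
satisfies `‖λ‖_p = √((‖μ‖_p + ‖γ‖_p)/2) ≤ ‖T‖_p = √((‖T₁‖_p + ‖T₂‖_p)/2)`, and hence the
supremum `r_p(T)` of these `‖λ‖_p` is at most `‖T‖_p`. -/
theorem bicomplex_spectral_radius_le_opNorm {d m : ℕ} (p : ℝ) (hp : 1 ≤ p)
    (A' A'' : Fin m → Matrix (Fin d) (Fin d) ℂ)
    (h' : ∀ i j, A' i * A' j = A' j * A' i)
    (h'' : ∀ i j, A'' i * A'' j = A'' j * A'' i) :
    (∀ μ γ : Fin m → ℂ, IsJointEigC A' μ → IsJointEigC A'' γ →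
      Real.sqrt (((∑ k, ‖μ k‖ ^ p) ^ (1 / p) + (∑ k, ‖γ k‖ ^ p) ^ (1 / p)) / 2) ≤
        Real.sqrt ((opNormP p A' + opNormP p A'') / 2)) ∧
    sSup {r : ℝ | ∃ μ γ : Fin m → ℂ, IsJointEigC A' μ ∧ IsJointEigC A'' γ ∧
        r = Real.sqrt (((∑ k, ‖μ k‖ ^ p) ^ (1 / p) + (∑ k, ‖γ k‖ ^ p) ^ (1 / p)) / 2)} ≤
      Real.sqrt ((opNormP p A' + opNormP p A'') / 2) := by
  have main : ∀ μ γ : Fin m → ℂ, IsJointEigC A' μ → IsJointEigC A'' γ →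
      Real.sqrt (((∑ k, ‖μ k‖ ^ p) ^ (1 / p) + (∑ k, ‖γ k‖ ^ p) ^ (1 / p)) / 2) ≤
        Real.sqrt ((opNormP p A' + opNormP p A'') / 2) := by
    intro μ γ hμ hγ
    apply Real.sqrt_le_sqrt
    have h1 := eig_le p hp A' μ hμ
    have h2 := eig_le p hp A'' γ hγ
    linarith
  refine ⟨main, ?_⟩
  refine Real.sSup_le ?_ (Real.sqrt_nonneg _)
  rintro r ⟨μ, γ, hμ, hγ, rfl⟩
  exact main μ γ hμ hγ
end

section
/- Let H₁, H₂ be complex Hilbert spaces, H = H₁ × H₂ with norm ‖(x', x'')‖ = ((‖x'‖² + ‖x''‖²)/2)^{1/2}, and let T₁ = (T₁', T₁''), T₂ = (T₂', T₂'') be bicomplex bounded operators on H acting componentwise. Let λ₁ = (λ₁', λ₁''), λ₂ = (λ₂', λ₂'') be bicomplex scalars, and suppose (λ₁, λ₂) lies in the joint approximate point spectrum of (T₁, T₂), i.e. there is a sequence x_n ∈ H with ‖x_n‖ = 1 and ‖(T₁ − λ₁)x_n‖ → 0 and ‖(T₂ − λ₂)x_n‖ → 0. Then (λ₁', λ₂')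 lies in the joint approximate point spectrum of the complex pair (T₁', T₂') on H₁, or (λ₁'', λ₂'') lies in the joint approximate point spectrum of the complex pair (T₁'', T₂'') on H₂. In other words, σ_{ap}(T₁, T₂) ⊆ σ_{ap}(T₁', T₂')e₁ + (ℂ × ℂ)e₂ ∪ (ℂ × ℂ)e₁ + σ_{ap}(T₁'', T₂'')e₂. -/
open Filter Topology

/-- `(μ₁, μ₂)` lies in the joint approximate point spectrum of a pair `(S₁, S₂)` of bounded
operators on a complex Hilbert space `K`: there are unit vectors `y n` with
`‖(S₁ − μ₁) y n‖ → 0` and `‖(S₂ − μ₂) y n‖ → 0`. -/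
def IsJointApproxEig {K : Type*} [NormedAddCommGroup K] [InnerProductSpace ℂ K]
    (S₁ S₂ : K →L[ℂ] K) (μ₁ μ₂ : ℂ) : Prop :=
  ∃ y : ℕ → K, (∀ n, ‖y n‖ = 1) ∧
    Tendsto (fun n => ‖S₁ (y n) - μ₁ • y n‖) atTop (nhds 0) ∧
    Tendsto (fun n => ‖S₂ (y n) - μ₂ • y n‖) atTop (nhds 0)

lemma le_sqrt_two_mul (a b : ℝ) (ha : 0 ≤ a) :
    a ≤ Real.sqrt 2 * Real.sqrt ((a ^ 2 + b ^ 2) / 2) := by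
  rw [← Real.sqrt_mul (by norm_num), show 2 * ((a ^ 2 + b ^ 2) / 2) = a ^ 2 + b ^ 2 by ring]
  calc a = Real.sqrt (a ^ 2) := (Real.sqrt_sq ha).symm
  _ ≤ _ := Real.sqrt_le_sqrt (by nlinarith [sq_nonneg b])

lemma tendsto_of_sqrt_avg {a b : ℕ → ℝ} (ha : ∀ n, 0 ≤ a n)
    (h : Filter.Tendsto (fun n => Real.sqrt ((a n ^ 2 + b n ^ 2) / 2)) Filter.atTop (nhds 0)) :
    Filter.Tendsto a Filter.atTop (nhds 0) := by
  refine squeeze_zero ha (fun n => le_sqrt_two_mul (a n) (b n) (ha n)) ?_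
  have := h.const_mul (Real.sqrt 2)
  simpa using this

/-- model the bicomplex Hilbert module as `H = H₁ × H₂` with the norm
`‖(x', x'')‖ = √((‖x'‖² + ‖x''‖²)/2)`, bicomplex operators `T₁ = (T₁', T₁'')`,
`T₂ = (T₂', T₂'')` and bicomplex scalars `λ₁ = (λ₁', λ₁'')`, `λ₂ = (λ₂', λ₂'')` acting
componentwise.  If `(λ₁, λ₂)` lies in the joint approximate point spectrum of `(T₁, T₂)` —
i.e. there is a sequence `x n ∈ H` of unit vectors with `‖(T₁ − λ₁) x n‖ → 0` and
`‖(T₂ − λ₂) x n‖ → 0` — then `(λ₁', λ₂')` lies in the joint approximate point spectrum of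
`(T₁', T₂')` on `H₁`, or `(λ₁'', λ₂'')` lies in that of `(T₁'', T₂'')` on `H₂`. -/
theorem bicomplex_approx_point_spectrum_subset
    {H₁ H₂ : Type*}
    [NormedAddCommGroup H₁] [InnerProductSpace ℂ H₁] [CompleteSpace H₁]
    [NormedAddCommGroup H₂] [InnerProductSpace ℂ H₂] [CompleteSpace H₂]
    (T₁' T₂' : H₁ →L[ℂ] H₁) (T₁'' T₂'' : H₂ →L[ℂ] H₂)
    (lam₁' lam₁'' lam₂' lam₂'' : ℂ)
    (h : ∃ x : ℕ → H₁ × H₂,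
      (∀ n, Real.sqrt ((‖(x n).1‖ ^ 2 + ‖(x n).2‖ ^ 2) / 2) = 1) ∧
      Tendsto (fun n => Real.sqrt
        ((‖T₁' (x n).1 - lam₁' • (x n).1‖ ^ 2 + ‖T₁'' (x n).2 - lam₁'' • (x n).2‖ ^ 2) / 2))
        atTop (nhds 0) ∧
      Tendsto (fun n => Real.sqrt
        ((‖T₂' (x n).1 - lam₂' • (x n).1‖ ^ 2 + ‖T₂'' (x n).2 - lam₂'' • (x n).2‖ ^ 2) / 2))
        atTop (nhds 0)) :
    IsJointApproxEig T₁' T₂' lam₁' lam₂' ∨ IsJointApproxEig T₁'' T₂'' lam₁'' lam₂'' := by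

  obtain ⟨x, hx, h1, h2⟩ := h
  have hsum : ∀ n, ‖(x n).1‖ ^ 2 + ‖(x n).2‖ ^ 2 = 2 := by
    intro n
    have := hx n
    rw [Real.sqrt_eq_one] at this
    have h2' : ((‖(x n).1‖ ^ 2 + ‖(x n).2‖ ^ 2) / 2) = 1 := this
    linarith
  have hcases : (∃ᶠ n in atTop, 1 ≤ ‖(x n).1‖) ∨ (∃ᶠ n in atTop, 1 ≤ ‖(x n).2‖) := by
    rw [← Filter.frequently_or_distrib]
    refine Filter.Frequently.of_forall (fun n => ?_)
    by_contra hc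
    push_neg at hc
    have := hsum n
    nlinarith [hc.1, hc.2, norm_nonneg (x n).1, norm_nonneg (x n).2]
  rcases hcases with hf | hf
  · obtain ⟨φ, hφ, hφ1⟩ := Filter.extraction_of_frequently_atTop hf
    left
    have hpos : ∀ n, (0:ℝ) < ‖(x (φ n)).1‖ := fun n => lt_of_lt_of_le one_pos (hφ1 n)
    refine ⟨fun n => (‖(x (φ n)).1‖ : ℂ)⁻¹ • (x (φ n)).1, fun n => ?_, ?_, ?_⟩
    · rw [norm_smul]
      simp [norm_inv, (hpos n).ne']
    · have ht : Tendsto (fun n => ‖T₁' (x (φ n)).1 - lam₁' • (x (φ n)).1‖) atTop (nhds 0) := by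
        exact tendsto_of_sqrt_avg (b := fun n => ‖T₁'' (x (φ n)).2 - lam₁'' • (x (φ n)).2‖)
          (fun n => norm_nonneg _) (h1.comp hφ.tendsto_atTop)
      refine squeeze_zero (fun n => norm_nonneg _) (fun n => ?_) ht
      have heq : T₁' ((‖(x (φ n)).1‖ : ℂ)⁻¹ • (x (φ n)).1) -
          lam₁' • ((‖(x (φ n)).1‖ : ℂ)⁻¹ • (x (φ n)).1) =
          (‖(x (φ n)).1‖ : ℂ)⁻¹ • (T₁' (x (φ n)).1 - lam₁' • (x (φ n)).1) := by
        rw [map_smul, smul_sub, smul_comm]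
      rw [heq, norm_smul]
      have : ‖((‖(x (φ n)).1‖ : ℂ))⁻¹‖ ≤ 1 := by
        rw [norm_inv]
        simp only [Complex.norm_real, Real.norm_eq_abs, abs_of_pos (hpos n)]
        exact inv_le_one_of_one_le₀ (hφ1 n)
      calc _ ≤ 1 * ‖T₁' (x (φ n)).1 - lam₁' • (x (φ n)).1‖ :=
            mul_le_mul_of_nonneg_right this (norm_nonneg _)
      _ = _ := one_mul _
    · have ht : Tendsto (fun n => ‖T₂' (x (φ n)).1 - lam₂' • (x (φ n)).1‖) atTop (nhds 0) := by
        exact tendsto_of_sqrt_avg (b := fun n => ‖T₂'' (x (φ n)).2 - lam₂'' • (x (φ n)).2‖)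
          (fun n => norm_nonneg _) (h2.comp hφ.tendsto_atTop)
      refine squeeze_zero (fun n => norm_nonneg _) (fun n => ?_) ht
      have heq : T₂' ((‖(x (φ n)).1‖ : ℂ)⁻¹ • (x (φ n)).1) -
          lam₂' • ((‖(x (φ n)).1‖ : ℂ)⁻¹ • (x (φ n)).1) =
          (‖(x (φ n)).1‖ : ℂ)⁻¹ • (T₂' (x (φ n)).1 - lam₂' • (x (φ n)).1) := by
        rw [map_smul, smul_sub, smul_comm]
      rw [heq, norm_smul]
      have : ‖((‖(x (φ n)).1‖ : ℂ))⁻¹‖ ≤ 1 := by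
        rw [norm_inv]
        simp only [Complex.norm_real, Real.norm_eq_abs, abs_of_pos (hpos n)]
        exact inv_le_one_of_one_le₀ (hφ1 n)
      calc _ ≤ 1 * ‖T₂' (x (φ n)).1 - lam₂' • (x (φ n)).1‖ :=
            mul_le_mul_of_nonneg_right this (norm_nonneg _)
      _ = _ := one_mul _
  · obtain ⟨φ, hφ, hφ1⟩ := Filter.extraction_of_frequently_atTop hf
    right
    have hpos : ∀ n, (0:ℝ) < ‖(x (φ n)).2‖ := fun n => lt_of_lt_of_le one_pos (hφ1 n)
    refine ⟨fun n => (‖(x (φ n)).2‖ : ℂ)⁻¹ • (x (φ n)).2, fun n => ?_, ?_, ?_⟩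
    · rw [norm_smul]
      simp [norm_inv, (hpos n).ne']
    · have ht : Tendsto (fun n => ‖T₁'' (x (φ n)).2 - lam₁'' • (x (φ n)).2‖) atTop (nhds 0) := by
        refine tendsto_of_sqrt_avg (b := fun n => ‖T₁' (x (φ n)).1 - lam₁' • (x (φ n)).1‖)
          (fun n => norm_nonneg _) ?_
        refine (h1.comp hφ.tendsto_atTop).congr (fun n => ?_)
        simp only [Function.comp]
        congr 1
        ring
      refine squeeze_zero (fun n => norm_nonneg _) (fun n => ?_) ht
      have heq : T₁'' ((‖(x (φ n)).2‖ : ℂ)⁻¹ • (x (φ n)).2) -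
          lam₁'' • ((‖(x (φ n)).2‖ : ℂ)⁻¹ • (x (φ n)).2) =
          (‖(x (φ n)).2‖ : ℂ)⁻¹ • (T₁'' (x (φ n)).2 - lam₁'' • (x (φ n)).2) := by
        rw [map_smul, smul_sub, smul_comm]
      rw [heq, norm_smul]
      have : ‖((‖(x (φ n)).2‖ : ℂ))⁻¹‖ ≤ 1 := by
        rw [norm_inv]
        simp only [Complex.norm_real, Real.norm_eq_abs, abs_of_pos (hpos n)]
        exact inv_le_one_of_one_le₀ (hφ1 n)
      calc _ ≤ 1 * ‖T₁'' (x (φ n)).2 - lam₁'' • (x (φ n)).2‖ :=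
            mul_le_mul_of_nonneg_right this (norm_nonneg _)
      _ = _ := one_mul _
    · have ht : Tendsto (fun n => ‖T₂'' (x (φ n)).2 - lam₂'' • (x (φ n)).2‖) atTop (nhds 0) := by
        refine tendsto_of_sqrt_avg (b := fun n => ‖T₂' (x (φ n)).1 - lam₂' • (x (φ n)).1‖)
          (fun n => norm_nonneg _) ?_
        refine (h2.comp hφ.tendsto_atTop).congr (fun n => ?_)
        simp only [Function.comp]
        congr 1
        ring
      refine squeeze_zero (fun n => norm_nonneg _) (fun n => ?_) ht
      have heq : T₂'' ((‖(x (φ n)).2‖ : ℂ)⁻¹ • (x (φ n)).2) -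
          lam₂'' • ((‖(x (φ n)).2‖ : ℂ)⁻¹ • (x (φ n)).2) =
          (‖(x (φ n)).2‖ : ℂ)⁻¹ • (T₂'' (x (φ n)).2 - lam₂'' • (x (φ n)).2) := by
        rw [map_smul, smul_sub, smul_comm]
      rw [heq, norm_smul]
      have : ‖((‖(x (φ n)).2‖ : ℂ))⁻¹‖ ≤ 1 := by
        rw [norm_inv]
        simp only [Complex.norm_real, Real.norm_eq_abs, abs_of_pos (hpos n)]
        exact inv_le_one_of_one_le₀ (hφ1 n)
      calc _ ≤ 1 * ‖T₂'' (x (φ n)).2 - lam₂'' • (x (φ n)).2‖ :=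
            mul_le_mul_of_nonneg_right this (norm_nonneg _)
      _ = _ := one_mul _
end

section
/- Let H₁, H₂ be complex Hilbert spaces, H = H₁ × H₂, and let T₁ = (T₁', T₁''), T₂ = (T₂', T₂'') be bicomplex bounded operators on H acting componentwise, with T₁T₂ = T₂T₁. Define the joint residual set σ_r(T₁, T₂) as the set of pairs of bicomplex scalars (λ₁, λ₂), λ_i = (λ_i', λ_i''), for which the subspace range(T₁ − λ₁) + range(T₂ − λ₂) is not dense in H. Then σ_r(T₁, T₂) = conj(σ_p((T₁')*, (T₂')*))e₁ + (ℂ × ℂ)e₂ ∪ (ℂ × ℂ)e₁ + conj(σ_p((T₁'')*, (T₂'')*))e₂; that is, (λ₁, λ₂) ∈ σ_r(T₁, T₂) if and only if (conj λ₁', conj λ₂') is a joint eigenvalue of ((T₁')*, (T₂')*) on H₁ or (conj λ₁'', conj λ₂'') is a joint eigenvalue of ((T₁'')*, (T₂'')*) on H₂. -/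
open ContinuousLinearMap ComplexConjugate
open scoped InnerProductSpace

private lemma forall_inner_eq_zero_iff
    {E F : Type*} [NormedAddCommGroup E] [InnerProductSpace ℂ E] [CompleteSpace E]
    [NormedAddCommGroup F] [InnerProductSpace ℂ F] [CompleteSpace F]
    (A : E →L[ℂ] F) (w : F) :
    (∀ x, ⟪A x, w⟫_ℂ = 0) ↔ adjoint A w = 0 := by
  constructor
  · intro h
    have h2 : ⟪w, A (adjoint A w)⟫_ℂ = 0 := by
      rw [← inner_conj_symm, h, map_zero]
    rw [← inner_self_eq_zero (𝕜 := ℂ), adjoint_inner_left, h2]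
  · intro h x
    have h2 : ⟪w, A x⟫_ℂ = 0 := by rw [← adjoint_inner_left, h, inner_zero_left]
    rw [← inner_conj_symm, h2, map_zero]

private lemma adjoint_sub_smul_id
    {E : Type*} [NormedAddCommGroup E] [InnerProductSpace ℂ E] [CompleteSpace E]
    (T : E →L[ℂ] E) (c : ℂ) (w : E) :
    adjoint (T - c • ContinuousLinearMap.id ℂ E) w = 0 ↔ adjoint T w = conj c • w := by
  have h : adjoint (T - c • ContinuousLinearMap.id ℂ E)
      = adjoint T - conj c • ContinuousLinearMap.id ℂ E := by
    rw [map_sub, map_smulₛₗ, adjoint_id]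
  rw [h]
  simp [sub_eq_zero]

/-- model the bicomplex Hilbert module as `H = H₁ × H₂` with bicomplex
operators `T₁ = (T₁', T₁'')`, `T₂ = (T₂', T₂'')` acting componentwise and commuting, and
bicomplex scalars `λ₁ = (λ₁', λ₁'')`, `λ₂ = (λ₂', λ₂'')` acting componentwise.  Then
`(λ₁, λ₂)` lies in the joint residual set `σ_r(T₁, T₂)` — i.e. the subspace
`range(T₁ − λ₁) + range(T₂ − λ₂)` is not dense in `H` — iff `(conj λ₁', conj λ₂')` is a
joint eigenvalue of `((T₁')*, (T₂')*)` on `H₁` or `(conj λ₁'', conj λ₂'')` is a joint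
eigenvalue of `((T₁'')*, (T₂'')*)` on `H₂`. -/
theorem bicomplex_residual_spectrum_iff
    {H₁ H₂ : Type*}
    [NormedAddCommGroup H₁] [InnerProductSpace ℂ H₁] [CompleteSpace H₁]
    [NormedAddCommGroup H₂] [InnerProductSpace ℂ H₂] [CompleteSpace H₂]
    (T₁' T₂' : H₁ →L[ℂ] H₁) (T₁'' T₂'' : H₂ →L[ℂ] H₂)
    (hcomm : (T₁'.prodMap T₁'').comp (T₂'.prodMap T₂'') =
      (T₂'.prodMap T₂'').comp (T₁'.prodMap T₁''))
    (lam₁' lam₁'' lam₂' lam₂'' : ℂ) :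
    (¬ Dense ((↑(LinearMap.range
          (((T₁' - lam₁' • ContinuousLinearMap.id ℂ H₁).prodMap
            (T₁'' - lam₁'' • ContinuousLinearMap.id ℂ H₂) :
            (H₁ × H₂) →L[ℂ] (H₁ × H₂)) :
            (H₁ × H₂) →ₗ[ℂ] (H₁ × H₂)) ⊔
        LinearMap.range
          (((T₂' - lam₂' • ContinuousLinearMap.id ℂ H₁).prodMap
            (T₂'' - lam₂'' • ContinuousLinearMap.id ℂ H₂) :
            (H₁ × H₂) →L[ℂ] (H₁ × H₂)) :
            (H₁ × H₂) →ₗ[ℂ] (H₁ × H₂))) : Set (H₁ × H₂)))) ↔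
      ((∃ y : H₁, y ≠ 0 ∧
          adjoint T₁' y = conj lam₁' • y ∧ adjoint T₂' y = conj lam₂' • y) ∨
        (∃ z : H₂, z ≠ 0 ∧
          adjoint T₁'' z = conj lam₁'' • z ∧ adjoint T₂'' z = conj lam₂'' • z)) := by
  set A₁ : H₁ →L[ℂ] H₁ := T₁' - lam₁' • ContinuousLinearMap.id ℂ H₁ with hA₁
  set A₂ : H₂ →L[ℂ] H₂ := T₁'' - lam₁'' • ContinuousLinearMap.id ℂ H₂ with hA₂
  set B₁ : H₁ →L[ℂ] H₁ := T₂' - lam₂' • ContinuousLinearMap.id ℂ H₁ with hB₁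
  set B₂ : H₂ →L[ℂ] H₂ := T₂'' - lam₂'' • ContinuousLinearMap.id ℂ H₂ with hB₂
  set A : (H₁ × H₂) →L[ℂ] (H₁ × H₂) := A₁.prodMap A₂ with hA
  set B : (H₁ × H₂) →L[ℂ] (H₁ × H₂) := B₁.prodMap B₂ with hB
  set P : Submodule ℂ (H₁ × H₂) := LinearMap.range (A : (H₁ × H₂) →ₗ[ℂ] (H₁ × H₂)) with hP
  set Q : Submodule ℂ (H₁ × H₂) := LinearMap.range (B : (H₁ × H₂) →ₗ[ℂ] (H₁ × H₂)) with hQ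
  set e : WithLp 2 (H₁ × H₂) ≃L[ℂ] (H₁ × H₂) := WithLp.prodContinuousLinearEquiv 2 ℂ H₁ H₂
  -- transfer density to the L2 product
  have hdense : Dense ((↑(P ⊔ Q) : Set (H₁ × H₂))) ↔
      Dense ((↑(Submodule.map (e.symm : (H₁ × H₂) →ₗ[ℂ] WithLp 2 (H₁ × H₂)) (P ⊔ Q)) :
        Set (WithLp 2 (H₁ × H₂)))) := by
    rw [Submodule.map_coe]
    exact (e.symm.toHomeomorph.isDenseEmbedding.dense_image).symm
  rw [hdense]
  rw [Submodule.dense_iff_topologicalClosure_eq_top, Submodule.topologicalClosure_eq_top_iff,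
    ← ne_eq, Submodule.ne_bot_iff]
  rw [Submodule.map_sup, ← Submodule.inf_orthogonal]
  -- characterize membership in each orthogonal complement
  have key : ∀ (w : WithLp 2 (H₁ × H₂)) (C₁ : H₁ →L[ℂ] H₁) (C₂ : H₂ →L[ℂ] H₂),
      (w ∈ (Submodule.map (e.symm : (H₁ × H₂) →ₗ[ℂ] WithLp 2 (H₁ × H₂))
          (LinearMap.range ((C₁.prodMap C₂ : (H₁ × H₂) →L[ℂ] (H₁ × H₂)) :
            (H₁ × H₂) →ₗ[ℂ] (H₁ × H₂))))ᗮ) ↔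
        (adjoint C₁ (e w).1 = 0 ∧ adjoint C₂ (e w).2 = 0) := by
    intro w C₁ C₂
    rw [Submodule.mem_orthogonal]
    constructor
    · intro h
      constructor
      · rw [← forall_inner_eq_zero_iff]
        intro x
        have := h (e.symm ((C₁.prodMap C₂) (x, 0)))
          ⟨(C₁.prodMap C₂) (x, 0), ⟨(x, 0), rfl⟩, rfl⟩
        simpa [WithLp.prod_inner_apply, e] using this
      · rw [← forall_inner_eq_zero_iff]
        intro x
        have := h (e.symm ((C₁.prodMap C₂) (0, x)))
          ⟨(C₁.prodMap C₂) (0, x), ⟨(0, x), rfl⟩, rfl⟩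
        simpa [WithLp.prod_inner_apply, e] using this
    · rintro ⟨h1, h2⟩ u ⟨v, ⟨x, rfl⟩, rfl⟩
      rw [← forall_inner_eq_zero_iff] at h1 h2
      simpa [WithLp.prod_inner_apply, e] using
        congrArg₂ (· + ·) (h1 x.1) (h2 x.2)
  constructor
  · rintro ⟨w, hw, hw0⟩
    rw [Submodule.mem_inf, key, key] at hw
    obtain ⟨⟨hA1, hA2⟩, ⟨hB1, hB2⟩⟩ := hw
    have hne : (e w).1 ≠ 0 ∨ (e w).2 ≠ 0 := by
      by_contra hc
      push_neg at hc
      apply hw0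
      have : e w = 0 := Prod.ext hc.1 hc.2
      have := congrArg e.symm this
      simpa using this
    rcases hne with hne | hne
    · left
      exact ⟨(e w).1, hne, (adjoint_sub_smul_id T₁' lam₁' _).mp hA1,
        (adjoint_sub_smul_id T₂' lam₂' _).mp hB1⟩
    · right
      exact ⟨(e w).2, hne, (adjoint_sub_smul_id T₁'' lam₁'' _).mp hA2,
        (adjoint_sub_smul_id T₂'' lam₂'' _).mp hB2⟩
  · rintro (⟨y, hy, hy1, hy2⟩ | ⟨z, hz, hz1, hz2⟩)
    · refine ⟨e.symm (y, 0), ?_, by simpa using hy⟩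
      rw [Submodule.mem_inf, key, key]
      simp only [e, WithLp.prodContinuousLinearEquiv_apply]
      refine ⟨⟨?_, by simp⟩, ?_, by simp⟩
      · rw [hA₁, adjoint_sub_smul_id]; exact hy1
      · rw [hB₁, adjoint_sub_smul_id]; exact hy2
    · refine ⟨e.symm (0, z), ?_, by simpa using hz⟩
      rw [Submodule.mem_inf, key, key]
      simp only [e, WithLp.prodContinuousLinearEquiv_apply]
      refine ⟨⟨by simp, ?_⟩, by simp, ?_⟩
      · rw [hA₂, adjoint_sub_smul_id]; exact hz1
      · rw [hB₂, adjoint_sub_smul_id]; exact hz2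
end
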